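/- arXiv:2405.15963 — 2 statements merged into one kernel-verified Lean document; each statement's English description precedes it below -/
import Mathlib

section
/- Let s_1, ..., s_N be strictly positive natural numbers with sum S. Then the sum over i from 1 to N of s_i / (s_1 + ... + s_i) is at most the harmonic number H_S = 1 + 1/2 + ... + 1/S. -/
lemma stmt_0_aux (N : ℕ) (s : ℕ → ℕ) (hs : ∀ i < N, 0 < s i) :
    ∑ i ∈ Finset.range N, (s i : ℝ) / (∑ j ∈ Finset.range (i + 1), (s j : ℝ)) ≤
      ∑ k ∈ Finset.range (∑ i ∈ Finset.range N, s i), (1 : ℝ) / (k + 1) := by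
  induction N with
  | zero => simp
  | succ n ih =>
    rw [Finset.sum_range_succ (f := fun i => (s i : ℝ) / (∑ j ∈ Finset.range (i + 1), (s j : ℝ))), Finset.sum_range_succ (f := s)]
    have hsn : 0 < s n := hs n (Nat.lt_succ_self n)
    have hT : (0:ℝ) ≤ ∑ j ∈ Finset.range n, (s j : ℝ) := by positivity
    have key : (s n : ℝ) / (∑ j ∈ Finset.range (n + 1), (s j : ℝ)) ≤
        ∑ k ∈ Finset.range (s n), (1:ℝ) / ((∑ i ∈ Finset.range n, s i) + k + 1) := by
      rw [Finset.sum_range_succ]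
      have hd : (0:ℝ) < (∑ j ∈ Finset.range n, (s j : ℝ)) + s n := by
        have : (0:ℝ) < (s n : ℝ) := by exact_mod_cast hsn
        linarith
      calc (s n : ℝ) / ((∑ j ∈ Finset.range n, (s j : ℝ)) + s n)
          = ∑ _k ∈ Finset.range (s n), (1:ℝ) / ((∑ j ∈ Finset.range n, (s j : ℝ)) + s n) := by
            rw [Finset.sum_const, Finset.card_range, nsmul_eq_mul]
            field_simp
        _ ≤ ∑ k ∈ Finset.range (s n), (1:ℝ) / ((∑ i ∈ Finset.range n, s i) + k + 1) := by
            apply Finset.sum_le_sum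
            intro k hk
            rw [Finset.mem_range] at hk
            have hcast : ((∑ i ∈ Finset.range n, s i : ℕ) : ℝ) = ∑ j ∈ Finset.range n, (s j : ℝ) := by
              push_cast; ring
            rw [hcast]
            apply one_div_le_one_div_of_le
            · positivity
            · have : (k:ℝ) + 1 ≤ (s n : ℝ) := by exact_mod_cast hk
              linarith
    have ih' := ih (fun i hi => hs i (hi.trans (Nat.lt_succ_self n)))
    have conv : ∀ k ∈ Finset.range (s n),
        (1:ℝ) / ((∑ i ∈ Finset.range n, s i) + k + 1) = 1 / (((∑ i ∈ Finset.range n, s i) + k : ℕ) + 1) := by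
      intro k _; push_cast; ring_nf
    rw [Finset.sum_congr rfl conv] at key
    have split := Finset.sum_range_add (fun k => (1:ℝ)/(k+1)) (∑ i ∈ Finset.range n, s i) (s n)
    rw [split]
    linarith

/-- Harmonic-sum bound: for strictly positive naturals `s 0, …, s (N-1)` with sum `S`,
the sum of `s i / (s 0 + … + s i)` is at most the harmonic number `H_S`. -/
theorem stmt_0 (N S : ℕ) (s : ℕ → ℕ) (hs : ∀ i < N, 0 < s i)
    (hS : S = ∑ i ∈ Finset.range N, s i) :
    ∑ i ∈ Finset.range N, (s i : ℝ) / (∑ j ∈ Finset.range (i + 1), (s j : ℝ)) ≤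
      ∑ k ∈ Finset.range S, (1 : ℝ) / (k + 1) := by
  subst hS
  exact stmt_0_aux N s hs
end

section
/- Let s_2, ..., s_N be strictly positive natural numbers with sum S (summing from index 2), and assume s_2 ≥ 2. Then the sum over i from 3 to N of (s_{i-1}·s_i) / C(s_2 + ... + s_i, 2) is at most 2·H_S, where C(m,2) = m(m-1)/2 and H_S is the S-th harmonic number. -/
/-- For strictly positive naturals `s 2, …, s N` with sum `S` and `s 2 ≥ 2`,
the sum over `i` from `3` to `N` of `s (i-1) · s i / C(s 2 + … + s i, 2)`
is at most `2 · H_S`. -/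
theorem stmt_2 (N S : ℕ) (s : ℕ → ℕ) (hs : ∀ i, 2 ≤ i → i ≤ N → 0 < s i) (h2 : 2 ≤ s 2)
    (hS : S = ∑ i ∈ Finset.Icc 2 N, s i) :
    ∑ i ∈ Finset.Icc 3 N,
        ((s (i - 1) : ℝ) * (s i : ℝ)) / ((∑ j ∈ Finset.Icc 2 i, s j).choose 2 : ℝ) ≤
      2 * ∑ k ∈ Finset.range S, (1 : ℝ) / (k + 1) := by
  classical
  set P : ℕ → ℕ := fun i => ∑ j ∈ Finset.Icc 2 i, s j with hPdef
  have hPi : ∀ i, (∑ j ∈ Finset.Icc 2 i, s j) = P i := fun i => rfl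
  simp only [hPi] at hS ⊢
  have hmono : ∀ a b : ℕ, a ≤ b → P a ≤ P b := by
    intro a b hab
    exact Finset.sum_le_sum_of_subset (Finset.Icc_subset_Icc_right hab)
  have hP2 : P 2 = s 2 := by simp [hPdef]
  have hstep : ∀ i, 3 ≤ i → P i = P (i - 1) + s i := by
    intro i h3
    have h1 : i = (i - 1) + 1 := by omega
    rw [show P i = ∑ j ∈ Finset.Icc 2 ((i-1)+1), s j by rw [← h1],
      Finset.sum_Icc_succ_top (by omega : 2 ≤ i - 1 + 1)]
    rw [← h1]
  have key : ∀ i ∈ Finset.Icc 3 N,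
      ((s (i - 1) : ℝ) * (s i : ℝ)) / ((P i).choose 2 : ℝ)
        ≤ 2 * ∑ k ∈ Finset.Ico (P (i - 1)) (P i), (1 : ℝ) / (k + 1) := by
    intro i hi
    simp only [Finset.mem_Icc] at hi
    have hsi : 1 ≤ s i := hs i (by omega) hi.2
    have ha2 : 2 ≤ P (i - 1) := le_trans (hP2 ▸ h2 : 2 ≤ P 2) (hmono 2 (i - 1) (by omega))
    have hb : P i = P (i - 1) + s i := hstep i hi.1
    have hb2 : 2 ≤ P i := by omega
    have hsle : s (i - 1) ≤ P (i - 1) := by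
      apply Finset.single_le_sum (f := s) (fun j _ => Nat.zero_le _)
      simp only [Finset.mem_Icc]; omega
    have hBpos : (0 : ℝ) < (P i : ℝ) := by positivity
    have hB2 : (2 : ℝ) ≤ (P i : ℝ) := by exact_mod_cast hb2
    have hx : (s (i - 1) : ℝ) ≤ (P i : ℝ) - 1 := by
      have : (s (i - 1) : ℕ) ≤ P i - 1 := by omega
      have := (Nat.cast_le (α := ℝ)).2 this
      rw [Nat.cast_sub (by omega)] at this
      simpa using this
    have hy : (0 : ℝ) ≤ (s i : ℝ) := by positivity
    have h1 : ((s (i - 1) : ℝ) * (s i : ℝ)) / ((P i).choose 2 : ℝ)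
        ≤ 2 * (s i : ℝ) / (P i : ℝ) := by
      rw [Nat.cast_choose_two, div_le_div_iff₀ (by nlinarith) hBpos]
      nlinarith [mul_nonneg (mul_nonneg (sub_nonneg.2 hx) hy) hBpos.le]
    have h2' : (s i : ℝ) / (P i : ℝ)
        ≤ ∑ k ∈ Finset.Ico (P (i - 1)) (P i), (1 : ℝ) / (k + 1) := by
      have hcard : (Finset.Ico (P (i - 1)) (P i)).card = s i := by
        rw [Nat.card_Ico]; omega
      have := Finset.card_nsmul_le_sum (Finset.Ico (P (i - 1)) (P i))
        (fun k => (1 : ℝ) / (k + 1)) ((1 : ℝ) / (P i : ℝ)) ?_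
      · rw [hcard, nsmul_eq_mul] at this
        calc (s i : ℝ) / (P i : ℝ) = (s i : ℝ) * ((1 : ℝ) / (P i : ℝ)) := by ring
          _ ≤ _ := this
      · intro k hk
        simp only [Finset.mem_Ico] at hk
        apply one_div_le_one_div_of_le (by positivity)
        have : k + 1 ≤ P i := hk.2
        exact_mod_cast this
    calc ((s (i - 1) : ℝ) * (s i : ℝ)) / ((P i).choose 2 : ℝ)
        ≤ 2 * (s i : ℝ) / (P i : ℝ) := h1
      _ = 2 * ((s i : ℝ) / (P i : ℝ)) := by ring
      _ ≤ 2 * ∑ k ∈ Finset.Ico (P (i - 1)) (P i), (1 : ℝ) / (k + 1) := by linarith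
  refine le_trans (Finset.sum_le_sum key) ?_
  rw [← Finset.mul_sum]
  have hdisj : ((Finset.Icc 3 N : Finset ℕ) : Set ℕ).PairwiseDisjoint
      (fun i => Finset.Ico (P (i - 1)) (P i)) := by
    intro i hi j hj hij
    simp only [Finset.coe_Icc, Set.mem_Icc] at hi hj
    have hd : ∀ a b : ℕ, 3 ≤ a → a < b →
        Disjoint (Finset.Ico (P (a - 1)) (P a)) (Finset.Ico (P (b - 1)) (P b)) := by
      intro a b h3 hab
      rw [Finset.disjoint_left]
      intro k hk hk'
      simp only [Finset.mem_Ico] at hk hk'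
      have : P a ≤ P (b - 1) := hmono a (b - 1) (by omega)
      omega
    rcases lt_or_gt_of_ne hij with h | h
    · exact hd i j hi.1 h
    · exact (hd j i hj.1 h).symm
  rw [← Finset.sum_biUnion hdisj]
  gcongr 2 * ?_
  apply Finset.sum_le_sum_of_subset_of_nonneg
  · intro k hk
    simp only [Finset.mem_biUnion, Finset.mem_Ico] at hk
    obtain ⟨i, hi, _, hki⟩ := hk
    simp only [Finset.mem_Icc] at hi
    have : P i ≤ P N := hmono i N hi.2
    simp only [Finset.mem_range]
    omega
  · intro k _ _
    positivity
end
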